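/- Let d ≥ 1 be an integer, 1 ≤ r < ∞, and β > d(1 - 1/r). There exists a constant C > 0 such that for every measurable function F : ℝ^d → [0, ∞], the periodization of F satisfies ( ∫_{[0,1]^d} ( Σ_{n ∈ ℤ^d} F(x + n) )^r dx )^{1/r} ≤ C ( ∫_{ℝ^d} (1 + |x|)^{β r} F(x)^r dx )^{1/r}. -/

import Mathlib

open MeasureTheory Real ENNReal

section PeriodizationAux

open Submodule

variable (d : ℕ)

noncomputable abbrev bE (d : ℕ) : Module.Basis (Fin d) ℝ (EuclideanSpace ℝ (Fin d)) :=
  (EuclideanSpace.basisFun (Fin d) ℝ).toBasis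

noncomputable def Lv (d : ℕ) (n : Fin d → ℤ) : EuclideanSpace ℝ (Fin d) :=
  (WithLp.equiv 2 (Fin d → ℝ)).symm (fun i => (n i : ℝ))

example (n : Fin d → ℤ) (i : Fin d) : (Lv d n) i = (n i : ℝ) := rfl

example (x : EuclideanSpace ℝ (Fin d)) (i : Fin d) : (bE d).repr x i = x i := by
  simp [bE]

lemma mem_span_Lv (n : Fin d → ℤ) : Lv d n ∈ span ℤ (Set.range (bE d)) := by
  rw [Module.Basis.mem_span_iff_repr_mem]
  intro i
  exact ⟨n i, by simp [bE, Lv, OrthonormalBasis.coe_toBasis_repr_apply,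
    EuclideanSpace.basisFun_repr]⟩

noncomputable def latEquiv (d : ℕ) : (Fin d → ℤ) ≃ (span ℤ (Set.range (bE d))).toAddSubgroup where
  toFun n := ⟨Lv d n, by rw [Submodule.mem_toAddSubgroup]; exact mem_span_Lv d n⟩
  invFun v := fun i => ⌊(v : EuclideanSpace ℝ (Fin d)) i⌋
  left_inv n := by funext i; simp [Lv]
  right_inv v := by
    have hv := (Submodule.mem_toAddSubgroup _).mp v.2
    rw [Module.Basis.mem_span_iff_repr_mem] at hv
    ext1
    ext i
    obtain ⟨z, hz⟩ := hv i
    have : (v : EuclideanSpace ℝ (Fin d)) i = (z : ℝ) := by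
      simpa [bE] using hz.symm
    simp [Lv, this]

lemma fd_eq : ZSpan.fundamentalDomain (bE d) = {x : EuclideanSpace ℝ (Fin d) | ∀ i, x i ∈ Set.Ico (0:ℝ) 1} := by
  ext x
  simp [ZSpan.fundamentalDomain, bE]

lemma cube_ae_eq :
    ({x : EuclideanSpace ℝ (Fin d) | ∀ i, x i ∈ Set.Icc (0:ℝ) 1} : Set (EuclideanSpace ℝ (Fin d)))
      =ᵐ[volume] ZSpan.fundamentalDomain (bE d) := by
  rw [fd_eq]
  have hmp := EuclideanSpace.volume_preserving_symm_measurableEquiv_toLp (Fin d)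
  have h1 : ({x : EuclideanSpace ℝ (Fin d) | ∀ i, x i ∈ Set.Icc (0:ℝ) 1} : Set _)
      = (MeasurableEquiv.toLp 2 (Fin d → ℝ)).symm ⁻¹' (Set.pi Set.univ fun _ => Set.Icc (0:ℝ) 1) := by
    ext x
    simp only [Set.mem_setOf_eq, Set.mem_preimage, Set.mem_pi, Set.mem_univ, true_implies]
    rfl
  have h2 : ({x : EuclideanSpace ℝ (Fin d) | ∀ i, x i ∈ Set.Ico (0:ℝ) 1} : Set _)
      = (MeasurableEquiv.toLp 2 (Fin d → ℝ)).symm ⁻¹' (Set.pi Set.univ fun _ => Set.Ico (0:ℝ) 1) := by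
    ext x
    simp only [Set.mem_setOf_eq, Set.mem_preimage, Set.mem_pi, Set.mem_univ, true_implies]
    rfl
  have h3 : (Set.pi Set.univ fun _ : Fin d => Set.Icc (0:ℝ) 1)
      =ᵐ[volume] (Set.pi Set.univ fun _ : Fin d => Set.Ico (0:ℝ) 1) := by
    rw [MeasureTheory.volume_pi]
    exact (MeasureTheory.Measure.pi_Ico_ae_eq_pi_Icc (μ := fun _ : Fin d => (volume : Measure ℝ))
      (s := Set.univ) (f := fun _ => (0:ℝ)) (g := fun _ => (1:ℝ))).symm
  rw [h1, h2]
  exact hmp.quasiMeasurePreserving.preimage_ae_eq h3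

example : True := trivial

lemma tiling (g : EuclideanSpace ℝ (Fin d) → ℝ≥0∞) (hg : Measurable g) :
    ∫⁻ x in {x : EuclideanSpace ℝ (Fin d) | ∀ i, x i ∈ Set.Icc (0:ℝ) 1},
      ∑' n : Fin d → ℤ, g (x + Lv d n) = ∫⁻ y, g y := by
  have h1 : ∫⁻ x in {x : EuclideanSpace ℝ (Fin d) | ∀ i, x i ∈ Set.Icc (0:ℝ) 1},
      ∑' n : Fin d → ℤ, g (x + Lv d n)
      = ∫⁻ x in ZSpan.fundamentalDomain (bE d), ∑' n : Fin d → ℤ, g (x + Lv d n) :=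
    setLIntegral_congr (cube_ae_eq d)
  haveI : Countable (span ℤ (Set.range ⇑(bE d))).toAddSubgroup :=
    Countable.of_equiv _ (latEquiv d)
  have hfd := ZSpan.isAddFundamentalDomain' (bE d) (volume : Measure (EuclideanSpace ℝ (Fin d)))
  have h2 := hfd.lintegral_eq_tsum'' g
  have h3 := lintegral_tsum (μ := volume.restrict (ZSpan.fundamentalDomain (bE d)))
    (f := fun n (x : EuclideanSpace ℝ (Fin d)) => g (x + Lv d n))
    (fun n => (hg.comp (measurable_add_const (Lv d n))).aemeasurable)
  rw [h1, h3, h2,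
    ← ((latEquiv d).tsum_eq (fun v => ∫⁻ x in ZSpan.fundamentalDomain (bE d),
      g (v +ᵥ x)))]
  refine tsum_congr fun n => lintegral_congr fun x => ?_
  show g (x + Lv d n) = g ((latEquiv d) n +ᵥ x)
  have hv : (latEquiv d) n +ᵥ x = Lv d n + x := rfl
  rw [hv, add_comm]

lemma cube_volume :
    volume ({x : EuclideanSpace ℝ (Fin d) | ∀ i, x i ∈ Set.Icc (0:ℝ) 1}) = 1 := by
  have hmp := EuclideanSpace.volume_preserving_symm_measurableEquiv_toLp (Fin d)
  have h1 : ({x : EuclideanSpace ℝ (Fin d) | ∀ i, x i ∈ Set.Icc (0:ℝ) 1} : Set _)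
      = (MeasurableEquiv.toLp 2 (Fin d → ℝ)).symm ⁻¹' (Set.pi Set.univ fun _ => Set.Icc (0:ℝ) 1) := by
    ext x
    simp only [Set.mem_setOf_eq, Set.mem_preimage, Set.mem_pi, Set.mem_univ, true_implies]
    rfl
  rw [h1, hmp.measure_preimage (MeasurableSet.univ_pi (fun _ => measurableSet_Icc)).nullMeasurableSet,
    volume_pi_pi]
  simp [Real.volume_Icc]

lemma norm_sub_le_sqrt {x y : EuclideanSpace ℝ (Fin d)}
    (hx : ∀ i, x i ∈ Set.Icc (0:ℝ) 1) (hy : ∀ i, y i ∈ Set.Icc (0:ℝ) 1) :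
    ‖y - x‖ ≤ Real.sqrt d := by
  rw [EuclideanSpace.norm_eq]
  apply Real.sqrt_le_sqrt
  calc ∑ i, ‖(y - x) i‖ ^ 2 ≤ ∑ i : Fin d, 1 := by
        refine Finset.sum_le_sum fun i _ => ?_
        have h1 : (y - x) i = y i - x i := rfl
        rw [h1, Real.norm_eq_abs]
        obtain ⟨hx0, hx1⟩ := hx i; obtain ⟨hy0, hy1⟩ := hy i
        have habs : |y i - x i| ≤ 1 := abs_le.mpr ⟨by linarith, by linarith⟩
        calc |y i - x i| ^ 2 ≤ 1 ^ 2 := by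
              exact pow_le_pow_left₀ (abs_nonneg _) habs 2
          _ = 1 := one_pow 2
    _ = d := by simp

lemma tsum_holder {ι : Type*} {p : ℝ} (hp : 1 ≤ p) (w f : ι → ℝ≥0∞) :
    ∑' i, w i * f i ≤ (∑' i, w i) ^ (1 - p⁻¹) * (∑' i, w i * f i ^ p) ^ p⁻¹ := by
  rw [ENNReal.tsum_eq_iSup_sum]
  refine iSup_le fun s => ?_
  refine (ENNReal.inner_le_weight_mul_Lp_of_nonneg s hp w f).trans ?_
  have h1 : (0:ℝ) ≤ 1 - p⁻¹ := by
    have : p⁻¹ ≤ 1 := by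
      rw [inv_le_one_iff₀]; right; linarith
    linarith
  exact mul_le_mul' (ENNReal.rpow_le_rpow (ENNReal.sum_le_tsum s) h1)
    (ENNReal.rpow_le_rpow (ENNReal.sum_le_tsum s) (by positivity))

lemma cube_measurable :
    MeasurableSet ({x : EuclideanSpace ℝ (Fin d) | ∀ i, x i ∈ Set.Icc (0:ℝ) 1}) := by
  have h1 : ({x : EuclideanSpace ℝ (Fin d) | ∀ i, x i ∈ Set.Icc (0:ℝ) 1} : Set _)
      = ⋂ i, {x : EuclideanSpace ℝ (Fin d) | x i ∈ Set.Icc (0:ℝ) 1} := by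
    ext x; simp
  rw [h1]
  exact MeasurableSet.iInter fun i =>
    ((EuclideanSpace.proj (𝕜 := ℝ) i).continuous.measurable) measurableSet_Icc

lemma weight_meas (γ : ℝ) :
    Measurable (fun y : EuclideanSpace ℝ (Fin d) => ENNReal.ofReal ((1 + ‖y‖) ^ (-γ))) := by
  fun_prop

lemma weight_sum_bound (γ : ℝ) (hγ : (d:ℝ) < γ) :
    ∃ B : ℝ≥0∞, B ≠ ⊤ ∧ ∀ x ∈ {x : EuclideanSpace ℝ (Fin d) | ∀ i, x i ∈ Set.Icc (0:ℝ) 1},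
      ∑' n : Fin d → ℤ, ENNReal.ofReal ((1 + ‖x + Lv d n‖) ^ (-γ)) ≤ B := by
  have hγ0 : (0:ℝ) ≤ γ := le_trans (Nat.cast_nonneg d) hγ.le
  set S := {x : EuclideanSpace ℝ (Fin d) | ∀ i, x i ∈ Set.Icc (0:ℝ) 1} with hS
  set J := ∫⁻ y : EuclideanSpace ℝ (Fin d), ENNReal.ofReal ((1 + ‖y‖) ^ (-γ)) with hJdef
  have hJ : J < ⊤ := by
    apply finite_integral_one_add_norm
    rwa [finrank_euclideanSpace, Fintype.card_fin]
  set C : ℝ := (1 + Real.sqrt d) ^ γ with hC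
  have hCpos : 0 < C := Real.rpow_pos_of_pos (by positivity) _
  refine ⟨ENNReal.ofReal C * J, by finiteness, fun x hx => ?_⟩
  have key : ∀ y ∈ S, ∀ n : Fin d → ℤ,
      (1 + ‖x + Lv d n‖) ^ (-γ) ≤ C * (1 + ‖y + Lv d n‖) ^ (-γ) := by
    intro y hy n
    set A := 1 + ‖x + Lv d n‖ with hA
    set B' := 1 + ‖y + Lv d n‖ with hB'
    have hA0 : (0:ℝ) < A := by positivity
    have hB0 : (0:ℝ) < B' := by positivity
    have hd0 : (0:ℝ) ≤ Real.sqrt d := Real.sqrt_nonneg _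
    have hBA : B' ≤ (1 + Real.sqrt d) * A := by
      have h2 : ‖y + Lv d n‖ ≤ ‖x + Lv d n‖ + Real.sqrt d := by
        calc ‖y + Lv d n‖ = ‖(x + Lv d n) + (y - x)‖ := by congr 1; abel
          _ ≤ ‖x + Lv d n‖ + ‖y - x‖ := norm_add_le _ _
          _ ≤ ‖x + Lv d n‖ + Real.sqrt d := by
              gcongr; exact norm_sub_le_sqrt d hx hy
      have h3 : (0:ℝ) ≤ ‖x + Lv d n‖ := norm_nonneg _
      rw [hA, hB']; nlinarith
    have h2 : B' ^ γ ≤ C * A ^ γ := by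
      rw [hC, ← Real.mul_rpow (by positivity) hA0.le]
      exact Real.rpow_le_rpow hB0.le hBA hγ0
    have hApow : (0:ℝ) < A ^ γ := Real.rpow_pos_of_pos hA0 _
    have hBpow : (0:ℝ) < B' ^ γ := Real.rpow_pos_of_pos hB0 _
    rw [Real.rpow_neg hA0.le, Real.rpow_neg hB0.le]
    calc (A ^ γ)⁻¹ = 1 / A ^ γ := (inv_eq_one_div _)
      _ ≤ C / B' ^ γ := by rw [div_le_div_iff₀ hApow hBpow]; nlinarith
      _ = C * (B' ^ γ)⁻¹ := by rw [div_eq_mul_inv]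
  calc ∑' n : Fin d → ℤ, ENNReal.ofReal ((1 + ‖x + Lv d n‖) ^ (-γ))
      = (∑' n : Fin d → ℤ, ENNReal.ofReal ((1 + ‖x + Lv d n‖) ^ (-γ))) * volume S := by
        rw [cube_volume d, mul_one]
    _ = ∫⁻ _ in S, (∑' n : Fin d → ℤ, ENNReal.ofReal ((1 + ‖x + Lv d n‖) ^ (-γ))) := by
        rw [setLIntegral_const]
    _ ≤ ∫⁻ y in S, (ENNReal.ofReal C *
          ∑' n : Fin d → ℤ, ENNReal.ofReal ((1 + ‖y + Lv d n‖) ^ (-γ))) := by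
        refine setLIntegral_mono' (cube_measurable d) fun y hy => ?_
        rw [← ENNReal.tsum_mul_left]
        refine ENNReal.tsum_le_tsum fun n => ?_
        rw [← ENNReal.ofReal_mul hCpos.le]
        exact ENNReal.ofReal_le_ofReal (key y hy n)
    _ = ENNReal.ofReal C * ∫⁻ y in S,
          ∑' n : Fin d → ℤ, ENNReal.ofReal ((1 + ‖y + Lv d n‖) ^ (-γ)) := by
        rw [lintegral_const_mul' _ _ ENNReal.ofReal_ne_top]
    _ = ENNReal.ofReal C * J := by
        rw [hJdef, tiling d _ (weight_meas d γ)]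

end PeriodizationAux

/-- Bound on the `L^r` norm (on the fundamental cube) of the `ℤ^d`-periodization of a
nonnegative function `F` by the weighted `L^r(ℝ^d)` norm `‖(1+|x|)^β F‖_{L^r}`,
valid when `β > d(1 - 1/r)`. -/
theorem periodization_Lr_bound (d : ℕ) (hd : 1 ≤ d) (r β : ℝ)
    (hr : 1 ≤ r) (hβ : d * (1 - 1 / r) < β) :
    ∃ C : ℝ, 0 < C ∧ ∀ F : EuclideanSpace ℝ (Fin d) → ℝ≥0∞, Measurable F →
      (∫⁻ x in {x : EuclideanSpace ℝ (Fin d) | ∀ i, x i ∈ Set.Icc (0 : ℝ) 1},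
          (∑' n : Fin d → ℤ, F (x + (WithLp.equiv 2 (Fin d → ℝ)).symm (fun i => (n i : ℝ)))) ^ r) ^ (1 / r)
        ≤ ENNReal.ofReal C *
            (∫⁻ x, ENNReal.ofReal ((1 + ‖x‖) ^ (β * r)) * F x ^ r) ^ (1 / r) := by
  have hr0 : (0:ℝ) < r := lt_of_lt_of_le one_pos hr
  have hrne : r ≠ 0 := hr0.ne'
  have hβ0 : 0 ≤ β := by
    have h1 : (0:ℝ) ≤ (d:ℝ) * (1 - 1/r) := by
      have h2 : 1/r ≤ 1 := by
        rw [div_le_one hr0]; exact hr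
      exact mul_nonneg (Nat.cast_nonneg d) (by linarith)
    linarith
  obtain ⟨γ, hγd, hγβ⟩ : ∃ γ : ℝ, (d:ℝ) < γ ∧ γ * (r - 1) ≤ β * r := by
    rcases eq_or_lt_of_le hr with heq | hlt
    · exact ⟨d + 1, by norm_num, by rw [← heq]; nlinarith [hβ0]⟩
    · have hr1 : (0:ℝ) < r - 1 := by linarith
      have h1 : (d:ℝ) < β * r / (r-1) := by
        rw [lt_div_iff₀ hr1]
        have h2 := mul_lt_mul_of_pos_right hβ hr0
        calc (d:ℝ)*(r-1) = d*(1-1/r)*r := by field_simp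
          _ < β * r := h2
      refine ⟨((d:ℝ) + β * r / (r - 1)) / 2, by linarith, ?_⟩
      have h3 : ((d:ℝ) + β * r / (r - 1)) / 2 ≤ β * r / (r-1) := by linarith
      calc ((d:ℝ) + β * r / (r - 1)) / 2 * (r-1) ≤ (β * r / (r-1)) * (r-1) := by
            exact mul_le_mul_of_nonneg_right h3 hr1.le
        _ = β * r := div_mul_cancel₀ _ hr1.ne'
  obtain ⟨B0, hB0top, hB0⟩ := weight_sum_bound d γ hγd
  set κ : ℝ := (1 - r⁻¹) * r with hκ
  have hκ0 : 0 ≤ κ := by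
    have : r⁻¹ ≤ 1 := by rw [inv_le_one_iff₀]; right; linarith
    have : 0 ≤ 1 - r⁻¹ := by linarith
    positivity
  have hBκtop : B0 ^ κ ≠ ⊤ := ENNReal.rpow_ne_top_of_nonneg hκ0 hB0top
  set Bfin : ℝ≥0∞ := (B0 ^ κ) ^ (1/r) with hBfin
  have hBfintop : Bfin ≠ ⊤ := ENNReal.rpow_ne_top_of_nonneg (by positivity) hBκtop
  refine ⟨Bfin.toReal + 1, by positivity, fun F hF => ?_⟩
  have hLv : ∀ n : Fin d → ℤ,
      ((WithLp.equiv 2 (Fin d → ℝ)).symm fun i => ((n i : ℝ))) = Lv d n := fun n => rfl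
  simp only [hLv]
  set S := {x : EuclideanSpace ℝ (Fin d) | ∀ i, x i ∈ Set.Icc (0:ℝ) 1} with hS
  set g : EuclideanSpace ℝ (Fin d) → ℝ≥0∞ :=
    fun y => ENNReal.ofReal ((1 + ‖y‖) ^ (β * r)) * F y ^ r with hg
  have hgm : Measurable g := by fun_prop
  -- pointwise bound
  have hpt : ∀ x ∈ S, (∑' n : Fin d → ℤ, F (x + Lv d n)) ^ r ≤ B0 ^ κ * ∑' n : Fin d → ℤ, g (x + Lv d n) := by
    intro x hx
    set w : (Fin d → ℤ) → ℝ≥0∞ := fun n => ENNReal.ofReal ((1 + ‖x + Lv d n‖) ^ (-γ)) with hw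
    set f : (Fin d → ℤ) → ℝ≥0∞ :=
      fun n => ENNReal.ofReal ((1 + ‖x + Lv d n‖) ^ γ) * F (x + Lv d n) with hf2
    have hnpos : ∀ n : Fin d → ℤ, (0:ℝ) < 1 + ‖x + Lv d n‖ := fun n => by positivity
    have hwf : ∀ n, F (x + Lv d n) = w n * f n := by
      intro n
      rw [hw, hf2, ← mul_assoc, ← ENNReal.ofReal_mul (Real.rpow_nonneg (hnpos n).le _),
        ← Real.rpow_add (hnpos n), neg_add_cancel, Real.rpow_zero, ENNReal.ofReal_one, one_mul]
    have hwfr : ∀ n, w n * f n ^ r ≤ g (x + Lv d n) := by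
      intro n
      have h1 : f n ^ r = ENNReal.ofReal ((1 + ‖x + Lv d n‖) ^ (γ * r)) * F (x + Lv d n) ^ r := by
        rw [hf2, ENNReal.mul_rpow_of_nonneg _ _ hr0.le,
          ENNReal.ofReal_rpow_of_nonneg (Real.rpow_nonneg (hnpos n).le _) hr0.le,
          ← Real.rpow_mul (hnpos n).le]
      rw [h1, hw, ← mul_assoc, ← ENNReal.ofReal_mul (Real.rpow_nonneg (hnpos n).le _),
        ← Real.rpow_add (hnpos n), hg]
      refine mul_le_mul_left (ENNReal.ofReal_le_ofReal ?_) _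
      refine Real.rpow_le_rpow_of_exponent_le (by linarith [norm_nonneg (x + Lv d n)]) ?_
      calc -γ + γ * r = γ * (r - 1) := by ring
        _ ≤ β * r := hγβ
    calc (∑' n : Fin d → ℤ, F (x + Lv d n)) ^ r
        = (∑' n : Fin d → ℤ, w n * f n) ^ r := by
          rw [tsum_congr hwf]
      _ ≤ ((∑' n, w n) ^ (1 - r⁻¹) * (∑' n, w n * f n ^ r) ^ r⁻¹) ^ r :=
          ENNReal.rpow_le_rpow (tsum_holder hr w f) hr0.le
      _ = ((∑' n, w n) ^ κ) * (∑' n, w n * f n ^ r) ^ (r⁻¹ * r) := by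
          rw [ENNReal.mul_rpow_of_nonneg _ _ hr0.le, ← ENNReal.rpow_mul, ← ENNReal.rpow_mul]
      _ ≤ B0 ^ κ * ∑' n : Fin d → ℤ, g (x + Lv d n) := by
          rw [inv_mul_cancel₀ hrne, ENNReal.rpow_one]
          exact mul_le_mul' (ENNReal.rpow_le_rpow (hB0 x hx) hκ0) (ENNReal.tsum_le_tsum hwfr)
  -- integrate
  have hint : (∫⁻ x in S, (∑' n : Fin d → ℤ, F (x + Lv d n)) ^ r)
      ≤ B0 ^ κ * ∫⁻ y, g y := by
    calc ∫⁻ x in S, (∑' n : Fin d → ℤ, F (x + Lv d n)) ^ r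
        ≤ ∫⁻ x in S, B0 ^ κ * ∑' n : Fin d → ℤ, g (x + Lv d n) :=
          setLIntegral_mono' (cube_measurable d) hpt
      _ = B0 ^ κ * ∫⁻ x in S, ∑' n : Fin d → ℤ, g (x + Lv d n) :=
          lintegral_const_mul' _ _ hBκtop
      _ = B0 ^ κ * ∫⁻ y, g y := by rw [tiling d g hgm]
  calc (∫⁻ x in S, (∑' n : Fin d → ℤ, F (x + Lv d n)) ^ r) ^ (1/r)
      ≤ (B0 ^ κ * ∫⁻ y, g y) ^ (1/r) := ENNReal.rpow_le_rpow hint (by positivity)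
    _ = Bfin * (∫⁻ y, g y) ^ (1/r) := by
        rw [ENNReal.mul_rpow_of_nonneg _ _ (by positivity : (0:ℝ) ≤ 1/r), hBfin]
    _ ≤ ENNReal.ofReal (Bfin.toReal + 1) * (∫⁻ y, g y) ^ (1/r) := by
        refine mul_le_mul_left ?_ _
        have hrw : Bfin = ENNReal.ofReal Bfin.toReal := (ENNReal.ofReal_toReal hBfintop).symm
        nth_rewrite 1 [hrw]
        exact ENNReal.ofReal_le_ofReal (by linarith [ENNReal.toReal_nonneg (a := Bfin)])
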